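/- Mean waiting time formula for monotonic SOAP policies: E[Q] = ∫₀^∞ τ(z_x)/(ρ̄(y_x)ρ̄(z_x)) dF(x) equals ∫₀^∞ [ (F̄(y_x)/ρ̄(y_x) + F̄(z_x)/ρ̄(z_x)) · λτ(z_x)F̄(x)/ρ̄(x)² + λx F̄(y_x)F̄(x)/ρ̄(y_x)² ] dx, where (y, z) is a hill-valley pair, ρ̄(a) = 1 − λ∫₀ᵃ F̄(t) dt, and τ(a) = λ∫₀ᵃ tF̄(t) dt. -/

import Mathlib

open MeasureTheory
open Set

/-- `ρ̄(a) = 1 − λ∫₀ᵃ F̄(t) dt`, where `F̄ = 1 − F`. -/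
noncomputable def rhoBar (F : ℝ → ℝ) (lam a : ℝ) : ℝ :=
  1 - lam * ∫ t in (0:ℝ)..a, (1 - F t)

/-- `τ(a) = λ∫₀ᵃ t F̄(t) dt`, where `F̄ = 1 − F`. -/
noncomputable def tauFn (F : ℝ → ℝ) (lam a : ℝ) : ℝ :=
  lam * ∫ t in (0:ℝ)..a, t * (1 - F t)

/-- A hill-valley partition `0 = u₀ ≤ v₀ < u₁ < v₁ < u₂ < …` of `ℝ≥0`
together with a hill-valley pair `(y, z)`: on a valley `(uᵢ, vᵢ]`, `y x = uᵢ`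
and `z x = vᵢ`; on a hill, `y x = z x = x`. -/
structure HillValleyPair (u v : ℕ → ℝ) (y z : ℝ → ℝ) : Prop where
  u_zero : u 0 = 0
  uv_zero : u 0 ≤ v 0
  v_lt_u : ∀ i, v i < u (i + 1)
  u_lt_v : ∀ i, u (i + 1) < v (i + 1)
  u_tendsto : Filter.Tendsto u Filter.atTop Filter.atTop
  valley : ∀ i, ∀ x ∈ Set.Ioc (u i) (v i), y x = u i ∧ z x = v i
  hill : ∀ i, ∀ x ∈ Set.Ioc (v i) (u (i + 1)), y x = x ∧ z x = x
  y_zero : y 0 = 0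
  z_zero : z 0 = v 0

/-- Mean waiting time formula for monotonic SOAP policies:
`E[Q] = ∫₀^∞ τ(z_x)/(ρ̄(y_x)ρ̄(z_x)) dF(x)` equals
`∫₀^∞ [(F̄(y_x)/ρ̄(y_x) + F̄(z_x)/ρ̄(z_x)) · λτ(z_x)F̄(x)/ρ̄(x)²
  + λx F̄(y_x)F̄(x)/ρ̄(y_x)²] dx`. -/
lemma hasDerivAt_rhoBar {F : ℝ → ℝ} (hF : Continuous F) (lam x : ℝ) :
    HasDerivAt (rhoBar F lam) (-(lam * (1 - F x))) x := by
  have hc : Continuous fun t => 1 - F t := continuous_const.sub hF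
  have h := intervalIntegral.integral_hasDerivAt_right
    (hc.intervalIntegrable 0 x) (hc.stronglyMeasurableAtFilter _ _) hc.continuousAt
  have h2 := (h.const_mul lam).const_sub 1
  exact h2

lemma hasDerivAt_tauFn {F : ℝ → ℝ} (hF : Continuous F) (lam x : ℝ) :
    HasDerivAt (tauFn F lam) (lam * (x * (1 - F x))) x := by
  have hc : Continuous fun t => t * (1 - F t) := continuous_id.mul (continuous_const.sub hF)
  have h := intervalIntegral.integral_hasDerivAt_right
    (hc.intervalIntegrable 0 x) (hc.stronglyMeasurableAtFilter _ _) hc.continuousAt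
  have h2 := h.const_mul lam
  exact h2

lemma continuous_rhoBar {F : ℝ → ℝ} (hF : Continuous F) (lam : ℝ) :
    Continuous (rhoBar F lam) := by
  have : Differentiable ℝ (rhoBar F lam) :=
    fun x => (hasDerivAt_rhoBar hF lam x).differentiableAt
  exact this.continuous

lemma continuous_tauFn {F : ℝ → ℝ} (hF : Continuous F) (lam : ℝ) :
    Continuous (tauFn F lam) := by
  have : Differentiable ℝ (tauFn F lam) :=
    fun x => (hasDerivAt_tauFn hF lam x).differentiableAt
  exact this.continuous

lemma rhoBar_zero (F : ℝ → ℝ) (lam : ℝ) : rhoBar F lam 0 = 1 := by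
  simp [rhoBar]

lemma tauFn_zero (F : ℝ → ℝ) (lam : ℝ) : tauFn F lam 0 = 0 := by
  simp [tauFn]

lemma abs_intervalIntegral_le {f : ℝ → ℝ} {p q s t : ℝ}
    (hint : IntegrableOn f (Ioo p q)) (hs : s ∈ Ioo p q) (ht : t ∈ Ioo p q) :
    |∫ x in s..t, f x| ≤ ∫ x in Ioo p q, |f x| := by
  have key : ∀ a b : ℝ, a ∈ Ioo p q → b ∈ Ioo p q → a ≤ b →
      |∫ x in a..b, f x| ≤ ∫ x in Ioo p q, |f x| := by
    intro a b ha hb hab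
    rw [intervalIntegral.integral_of_le hab]
    have hsub : Ioc a b ⊆ Ioo p q := fun x hx => ⟨lt_of_lt_of_le ha.1 (le_of_lt hx.1),
      lt_of_le_of_lt hx.2 hb.2⟩
    have h1 : |∫ x in Ioc a b, f x| ≤ ∫ x in Ioc a b, |f x| := by
      simpa [Real.norm_eq_abs] using
        norm_integral_le_integral_norm (μ := volume.restrict (Ioc a b)) f
    refine h1.trans ?_
    refine setIntegral_mono_set (hint.norm) ?_ (HasSubset.Subset.eventuallyLE hsub)
    · filter_upwards with x using abs_nonneg _
  rcases le_total s t with h | h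
  · exact key s t hs ht h
  · rw [intervalIntegral.integral_symm, abs_neg]
    exact key t s ht hs h

lemma var_lemma {F : ℝ → ℝ} (hF : Continuous F) {lam : ℝ} (hlam : 0 < lam)
    {p q c : ℝ} (hpq : p < q)
    (hR : ∀ x ∈ Ioo p q, rhoBar F lam x ≠ 0)
    (hsmall : ∀ ε > 0, ∃ x ∈ Ioo p q, |rhoBar F lam x| < ε)
    (hint : IntegrableOn (fun x => c * ((1 - F x) / rhoBar F lam x ^ 2)) (Ioo p q)) :
    c = 0 := by
  by_contra hc
  set R := rhoBar F lam with hRdef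
  set f : ℝ → ℝ := fun x => c * ((1 - F x) / R x ^ 2) with hfdef
  obtain ⟨s₀, hs₀⟩ := nonempty_Ioo.mpr hpq
  set M : ℝ := ∫ x in Ioo p q, |f x| with hM
  -- fundamental theorem of calculus on subintervals
  have hftc : ∀ t ∈ Ioo p q, ∫ x in s₀..t, f x = c / lam * (R t)⁻¹ - c / lam * (R s₀)⁻¹ := by
    intro t ht
    have huIcc : uIcc s₀ t ⊆ Ioo p q := Set.ordConnected_Ioo.uIcc_subset hs₀ ht
    refine intervalIntegral.integral_eq_sub_of_hasDerivAt (f := fun y => c / lam * (R y)⁻¹) (f' := f) (fun x hx => ?_) ?_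
    · have hx' := huIcc hx
      have hRx := hR x hx'
      have hd : HasDerivAt (fun y => (R y)⁻¹) (-(-(lam * (1 - F x))) / R x ^ 2) x :=
        (hasDerivAt_rhoBar hF lam x).inv hRx
      have hd2 := hd.const_mul (c / lam)
      have hlam' : lam ≠ 0 := ne_of_gt hlam
      refine hd2.congr_deriv ?_
      symm
      simp only [hfdef]
      field_simp
    · have : ContinuousOn f (uIcc s₀ t) := by
        apply ContinuousOn.mul continuousOn_const
        apply ContinuousOn.div
        · exact (continuous_const.sub hF).continuousOn
        · have hdiff : Differentiable ℝ R := fun x => (hasDerivAt_rhoBar hF lam x).differentiableAt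
          exact (hdiff.continuous.continuousOn).pow 2
        · intro x hx
          exact pow_ne_zero 2 (hR x (huIcc hx))
      exact this.intervalIntegrable
  have hbound : ∀ t ∈ Ioo p q, |(R t)⁻¹| ≤ M * lam / |c| + |(R s₀)⁻¹| := by
    intro t ht
    have h1 := abs_intervalIntegral_le hint hs₀ ht
    rw [hftc t ht] at h1
    have h2 : |c / lam| * |(R t)⁻¹ - (R s₀)⁻¹| ≤ M := by
      rw [← abs_mul, mul_sub]; exact h1
    have hcl : |c / lam| > 0 := by positivity
    have h3 : |(R t)⁻¹ - (R s₀)⁻¹| ≤ M / |c / lam| := (le_div_iff₀' hcl).mpr h2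
    have h4 : |(R t)⁻¹| ≤ M / |c / lam| + |(R s₀)⁻¹| := by
      have := abs_sub_abs_le_abs_sub (R t)⁻¹ (R s₀)⁻¹
      linarith
    have : M / |c / lam| = M * lam / |c| := by
      rw [abs_div, abs_of_pos hlam]; field_simp
    linarith [h4, this.le, this.ge]
  -- contradiction with hsmall
  set M₂ : ℝ := M * lam / |c| + |(R s₀)⁻¹| with hM₂
  have hM₂0 : 0 ≤ M₂ := le_trans (abs_nonneg _) (hbound s₀ hs₀)
  obtain ⟨x, hx, hxs⟩ := hsmall (M₂ + 1)⁻¹ (by positivity)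
  have hRx := hR x hx
  have h5 : |(R x)⁻¹| ≤ M₂ := hbound x hx
  have ha : 0 < |R x| := abs_pos.mpr hRx
  have h7 : (M₂ + 1) * |R x| < 1 := by
    have h8 := mul_lt_mul_of_pos_left hxs (show (0:ℝ) < M₂ + 1 by positivity)
    rwa [mul_inv_cancel₀ (show (M₂+1:ℝ) ≠ 0 by positivity)] at h8
  have h6 : M₂ + 1 < |R x|⁻¹ := by
    rw [show |R x|⁻¹ = 1 / |R x| from (one_div _).symm, lt_div_iff₀ ha]
    linarith
  rw [abs_inv] at h5
  linarith

section HillVar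
variable {F : ℝ → ℝ} {lam : ℝ}

set_option maxHeartbeats 2000000 in
/-- On a hill segment, `ρ̄` cannot approach `0` while staying nonzero. -/
lemma hillvar_lemma (hF : Differentiable ℝ F) (hlam : 0 < lam)
    {p q : ℝ} (hp : 0 < p) (hpq : p < q)
    (hR : ∀ x ∈ Ioo p q, rhoBar F lam x ≠ 0)
    (hsmall : ∀ ε > 0, ∃ x ∈ Ioo p q, |rhoBar F lam x| < ε)
    (hint1 : IntegrableOn
      (fun x => tauFn F lam x / (rhoBar F lam x * rhoBar F lam x) * deriv F x) (Ioo p q))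
    (hint2 : IntegrableOn (fun x =>
        ((1 - F x) / rhoBar F lam x + (1 - F x) / rhoBar F lam x)
          * (lam * tauFn F lam x * (1 - F x) / (rhoBar F lam x) ^ 2)
        + lam * x * (1 - F x) * (1 - F x) / (rhoBar F lam x) ^ 2) (Ioo p q)) :
    False := by
  have hFc : Continuous F := hF.continuous
  set R := rhoBar F lam with hRdef
  set T := tauFn F lam with hTdef
  set B : ℝ → ℝ := fun x => 1 - F x with hBdef
  set g : ℝ → ℝ := fun x => B x / R x with hgdef
  set Psi : ℝ → ℝ := fun x => B x * T x / R x ^ 2 with hPsidef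
  set r : ℝ → ℝ := fun x =>
    (B x / R x + B x / R x) * (lam * T x * B x / R x ^ 2)
      + lam * x * B x * B x / R x ^ 2 with hrdef
  set l : ℝ → ℝ := fun x => T x / (R x * R x) * deriv F x with hldef
  have hRc : Continuous R := continuous_rhoBar hFc lam
  have hTc : Continuous T := continuous_tauFn hFc lam
  have hBc : Continuous B := continuous_const.sub hFc
  have hrl_int : IntegrableOn (fun x => r x - l x) (Ioo p q) := hint2.sub hint1
  obtain ⟨s₀, hs₀⟩ := nonempty_Ioo.mpr hpq
  -- derivative of Psi is r - l on Ioo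
  have hPsi_deriv : ∀ x ∈ Ioo p q, HasDerivAt Psi (r x - l x) x := by
    intro x hx
    have hRx : R x ≠ 0 := hR x hx
    have hN : HasDerivAt (fun y => B y * T y)
        (-(deriv F x) * T x + B x * (lam * (x * B x))) x := by
      have hB' : HasDerivAt B (-(deriv F x)) x := ((hF x).hasDerivAt).const_sub 1
      exact hB'.mul (hasDerivAt_tauFn hFc lam x)
    have hD : HasDerivAt (fun y => R y ^ 2) (2 * R x ^ 1 * -(lam * B x)) x :=
      (hasDerivAt_rhoBar hFc lam x).pow 2
    have hdiv := hN.div hD (pow_ne_zero 2 hRx)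
    refine hdiv.congr_deriv ?_
    symm
    simp only [hrdef, hldef, pow_one]
    field_simp
    ring
  -- FTC for Psi
  have hPsi_ftc : ∀ t ∈ Ioo p q, ∫ x in s₀..t, (r x - l x) = Psi t - Psi s₀ := by
    intro t ht
    have huIcc : uIcc s₀ t ⊆ Ioo p q := Set.ordConnected_Ioo.uIcc_subset hs₀ ht
    refine intervalIntegral.integral_eq_sub_of_hasDerivAt
      (fun x hx => hPsi_deriv x (huIcc hx)) ?_
    rw [intervalIntegrable_iff]
    exact hrl_int.mono_set (Set.uIoc_subset_uIcc.trans huIcc)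
  -- bound on Psi
  set M₁ : ℝ := |Psi s₀| + ∫ x in Ioo p q, |r x - l x| with hM₁def
  have hIntAbs0 : 0 ≤ ∫ x in Ioo p q, |r x - l x| :=
    setIntegral_nonneg measurableSet_Ioo (fun x _ => abs_nonneg _)
  have hM₁0 : 0 ≤ M₁ := add_nonneg (abs_nonneg _) hIntAbs0
  have hPsi_bdd : ∀ t ∈ Ioo p q, |Psi t| ≤ M₁ := by
    intro t ht
    have h1 := abs_intervalIntegral_le hrl_int hs₀ ht
    rw [hPsi_ftc t ht] at h1
    have h2 : |Psi t| - |Psi s₀| ≤ |Psi t - Psi s₀| := abs_sub_abs_le_abs_sub _ _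
    simp only [hM₁def]
    linarith
  -- FTC for log R
  have hlog_ftc : ∀ t ∈ Ioo p q, ∫ x in s₀..t, ((R x)⁻¹ * -(lam * B x))
      = Real.log (R t) - Real.log (R s₀) := by
    intro t ht
    have huIcc : uIcc s₀ t ⊆ Ioo p q := Set.ordConnected_Ioo.uIcc_subset hs₀ ht
    refine intervalIntegral.integral_eq_sub_of_hasDerivAt
      (f := fun y => Real.log (R y)) (fun x hx => ?_) ?_
    · have h := (Real.hasDerivAt_log (hR x (huIcc hx))).comp x (hasDerivAt_rhoBar hFc lam x)
      exact h
    · apply ContinuousOn.intervalIntegrable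
      apply ContinuousOn.mul
      · exact hRc.continuousOn.inv₀ (fun x hx => hR x (huIcc hx))
      · exact (continuous_const.mul hBc).neg.continuousOn
  have hlamne : lam ≠ 0 := ne_of_gt hlam
  have hg_ftc : ∀ t ∈ Ioo p q, ∫ x in s₀..t, g x
      = -(1/lam) * (Real.log (R t) - Real.log (R s₀)) := by
    intro t ht
    rw [← hlog_ftc t ht, ← intervalIntegral.integral_const_mul]
    apply intervalIntegral.integral_congr
    intro x hx
    simp only [hgdef, div_eq_mul_inv]
    field_simp
  -- pointwise lower bound on r
  set C₃ : ℝ := (2*M₁+1)^2/(4*p) with hC₃def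
  have hC₃0 : 0 ≤ C₃ := by positivity
  have hpt : ∀ x ∈ Ioo p q, lam * |g x| - lam * C₃ ≤ r x := by
    intro x hx
    have hRx := hR x hx
    have hrx : r x = lam * x * g x ^ 2 + 2 * lam * (g x * Psi x) := by
      simp only [hrdef, hgdef, hPsidef]
      field_simp
      ring
    have h1 : |Psi x| ≤ M₁ := hPsi_bdd x hx
    have h2 : -(|g x| * M₁) ≤ g x * Psi x := by
      have := abs_mul (g x) (Psi x)
      have h3 : |g x * Psi x| ≤ |g x| * M₁ :=
        (abs_mul (g x) (Psi x)).le.trans (mul_le_mul_of_nonneg_left h1 (abs_nonneg _))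
      linarith [neg_abs_le (g x * Psi x)]
    have h4 : p * g x ^ 2 - 2 * M₁ * |g x| ≥ |g x| - C₃ := by
      have hs := sq_nonneg (2 * p * |g x| - (2*M₁+1))
      have hsa2 : p^2 * |g x|^2 = p^2 * g x^2 := by rw [sq_abs]
      have hpne : p ≠ 0 := ne_of_gt hp
      have hC : C₃ * (4*p) = (2*M₁+1)^2 := by
        rw [hC₃def]; field_simp
      nlinarith [hs, hsa2, hC, hp]
    have h5 : p * g x ^ 2 ≤ x * g x ^ 2 :=
      mul_le_mul_of_nonneg_right hx.1.le (sq_nonneg _)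
    nlinarith [mul_le_mul_of_nonneg_left h5 hlam.le, mul_le_mul_of_nonneg_left h2 hlam.le]
  -- integrate the bound
  set M₂ : ℝ := ∫ x in Ioo p q, |r x| with hM₂def
  have hKey : ∀ a b, a ∈ Ioo p q → b ∈ Ioo p q → a ≤ b →
      lam * |∫ x in a..b, g x| ≤ M₂ + lam * C₃ * (q - p) := by
    intro a b ha hb hab
    have hIoc : Ioc a b ⊆ Ioo p q := fun x hx =>
      ⟨lt_of_lt_of_le ha.1 hx.1.le, lt_of_le_of_lt hx.2 hb.2⟩
    have hIcc : Icc a b ⊆ Ioo p q := fun x hx =>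
      ⟨lt_of_lt_of_le ha.1 hx.1, lt_of_le_of_lt hx.2 hb.2⟩
    have hgcont : ContinuousOn g (Icc a b) :=
      hBc.continuousOn.div hRc.continuousOn (fun x hx => hR x (hIcc hx))
    have hg_int2 : IntegrableOn (fun x => |g x|) (Ioc a b) :=
      (hgcont.abs.integrableOn_Icc).mono_set Ioc_subset_Icc_self
    have hr_int2 : IntegrableOn r (Ioc a b) := hint2.mono_set hIoc
    have hconst : IntegrableOn (fun _ : ℝ => lam * C₃) (Ioc a b) :=
      integrableOn_const measure_Ioc_lt_top.ne
    have h1 : ∫ x in Ioc a b, (lam * |g x| - lam * C₃) ≤ ∫ x in Ioc a b, r x := by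
      apply setIntegral_mono_on ((hg_int2.const_mul lam).sub hconst) hr_int2 measurableSet_Ioc
      intro x hx
      exact hpt x (hIoc hx)
    have h2 : ∫ x in Ioc a b, (lam * |g x| - lam * C₃)
        = lam * (∫ x in Ioc a b, |g x|) - lam * C₃ * (b - a) := by
      rw [integral_sub (hg_int2.const_mul lam) hconst, integral_const_mul, setIntegral_const]
      rw [Real.volume_real_Ioc_of_le hab, smul_eq_mul]
      ring
    have h3 : ∫ x in Ioc a b, r x ≤ M₂ := by
      have h3a : ∫ x in Ioc a b, r x ≤ ∫ x in Ioc a b, |r x| :=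
        setIntegral_mono_on hr_int2 hr_int2.abs measurableSet_Ioc (fun x _ => le_abs_self _)
      have h3b : ∫ x in Ioc a b, |r x| ≤ M₂ := by
        apply setIntegral_mono_set hint2.abs
        · filter_upwards with x using abs_nonneg _
        · exact HasSubset.Subset.eventuallyLE hIoc
      linarith
    have h4 : |∫ x in a..b, g x| ≤ ∫ x in Ioc a b, |g x| := by
      rw [intervalIntegral.integral_of_le hab]
      simpa [Real.norm_eq_abs] using
        norm_integral_le_integral_norm (μ := volume.restrict (Ioc a b)) g
    have h5 : b - a ≤ q - p := by
      have := ha.1; have := hb.2; linarith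
    have h6 := mul_le_mul_of_nonneg_left h5 (by positivity : (0:ℝ) ≤ lam * C₃)
    have h7 := mul_le_mul_of_nonneg_left h4 hlam.le
    linarith
  -- conclude
  set M₄ : ℝ := M₂ + lam * C₃ * (q - p) + |Real.log (R s₀)| with hM₄def
  have hfin : ∀ t ∈ Ioo p q, -(Real.log (R t)) ≤ M₄ := by
    intro t ht
    have habs : lam * |∫ x in s₀..t, g x| ≤ M₂ + lam * C₃ * (q - p) := by
      rcases le_total s₀ t with hle | hle
      · exact hKey s₀ t hs₀ ht hle
      · have := hKey t s₀ ht hs₀ hle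
        rwa [intervalIntegral.integral_symm, abs_neg] at this
    rw [hg_ftc t ht] at habs
    have heq : lam * |-(1/lam) * (Real.log (R t) - Real.log (R s₀))|
        = |Real.log (R t) - Real.log (R s₀)| := by
      rw [abs_mul, abs_neg, abs_of_pos (by positivity : (0:ℝ) < 1/lam)]
      field_simp
    rw [heq] at habs
    have h8 : -(Real.log (R t) - Real.log (R s₀)) ≤ |Real.log (R t) - Real.log (R s₀)| :=
      neg_le_abs _
    have h9 : -|Real.log (R s₀)| ≤ Real.log (R s₀) := neg_abs_le _
    simp only [hM₄def]
    linarith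
  obtain ⟨x, hx, hxs⟩ := hsmall (Real.exp (-(M₄ + 1))) (Real.exp_pos _)
  have hRx := hR x hx
  have h1 : Real.log |R x| < -(M₄+1) := by
    have h := Real.log_lt_log (abs_pos.mpr hRx) hxs
    rwa [Real.log_exp] at h
  rw [Real.log_abs] at h1
  have h2 := hfin x hx
  linarith
end HillVar

lemma exists_transition {R : ℝ → ℝ} (hRc : Continuous R) {a b x₀ x₁ : ℝ}
    (h0 : 0 ≤ a) (hRzero : R 0 ≠ 0)
    (hx₀ : x₀ ∈ Icc a b) (hx₁ : x₁ ∈ Icc a b) (hR0 : R x₀ = 0) (hR1 : R x₁ ≠ 0) :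
    ∃ p q, a ≤ p ∧ 0 < p ∧ p < q ∧ q ≤ b ∧ (∀ x ∈ Ioo p q, R x ≠ 0) ∧
      (∀ ε, 0 < ε → ∃ x ∈ Ioo p q, |R x| < ε) := by
  have hne : x₁ ≠ x₀ := fun h => hR1 (h ▸ hR0)
  have hzero_pos : ∀ x, 0 ≤ x → R x = 0 → 0 < x := by
    intro x hx hRx
    rcases hx.lt_or_eq with h | h
    · exact h
    · exact absurd (h ▸ hRx) hRzero
  rcases hne.lt_or_gt with hlt | hlt
  · -- x₁ < x₀ : zero to the right
    set S : Set ℝ := {x | x ∈ Icc x₁ x₀ ∧ R x = 0} with hSdef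
    have hSclosed : IsClosed S := by
      have : S = Icc x₁ x₀ ∩ R ⁻¹' {0} := by
        ext x; constructor
        · rintro ⟨h1, h2⟩; exact ⟨h1, h2⟩
        · rintro ⟨h1, h2⟩; exact ⟨h1, h2⟩
      rw [this]
      exact isClosed_Icc.inter (isClosed_singleton.preimage hRc)
    have hSne : x₀ ∈ S := ⟨⟨hlt.le, le_refl _⟩, hR0⟩
    have hSbdd : BddBelow S := ⟨x₁, fun x hx => hx.1.1⟩
    set c := sInf S with hcdef
    have hcS : c ∈ S := hSclosed.csInf_mem ⟨x₀, hSne⟩ hSbdd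
    have hcx₁ : x₁ < c := by
      rcases (le_csInf ⟨x₀, hSne⟩ (fun x hx => hx.1.1)).lt_or_eq with h | h
      · exact h
      · exact absurd (show R x₁ = 0 by rw [h]; exact hcS.2) hR1
    have hcpos : 0 < c := hzero_pos c (le_trans h0 (le_trans hx₁.1 hcx₁.le)) hcS.2
    have hno : ∀ x ∈ Ico x₁ c, R x ≠ 0 := by
      intro x hx hRx
      have hxS : x ∈ S := ⟨⟨hx.1, le_trans hx.2.le hcS.1.2⟩, hRx⟩
      exact absurd (csInf_le hSbdd hxS) (not_le.mpr hx.2)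
    refine ⟨(x₁ + c)/2, c, ?_, ?_, ?_, ?_, ?_, ?_⟩
    · linarith [hx₁.1]
    · have := le_trans h0 hx₁.1; linarith
    · linarith
    · exact le_trans hcS.1.2 hx₀.2
    · intro x hx
      exact hno x ⟨by linarith [hx.1], hx.2⟩
    · intro ε hε
      obtain ⟨δ, hδ, hδ2⟩ := Metric.continuousAt_iff.mp (hRc.continuousAt (x := c)) ε hε
      set m := max ((x₁ + c)/2) (c - δ) with hmdef
      have hm : m < c := max_lt (by linarith) (by linarith)
      refine ⟨(m + c)/2, ⟨?_, by linarith⟩, ?_⟩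
      · have : (x₁ + c)/2 ≤ m := le_max_left _ _
        linarith
      · have hdist : dist ((m + c)/2) c < δ := by
        -- |(m+c)/2 - c| = (c - m)/2 ≤ δ/2 < δ
          rw [Real.dist_eq, abs_of_nonpos (by linarith)]
          have : c - δ ≤ m := le_max_right _ _
          linarith
        have := hδ2 hdist
        rwa [Real.dist_eq, hcS.2, sub_zero] at this
  · -- x₀ < x₁ : zero to the left
    set S : Set ℝ := {x | x ∈ Icc x₀ x₁ ∧ R x = 0} with hSdef
    have hSclosed : IsClosed S := by
      have : S = Icc x₀ x₁ ∩ R ⁻¹' {0} := by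
        ext x; constructor
        · rintro ⟨h1, h2⟩; exact ⟨h1, h2⟩
        · rintro ⟨h1, h2⟩; exact ⟨h1, h2⟩
      rw [this]
      exact isClosed_Icc.inter (isClosed_singleton.preimage hRc)
    have hSne : x₀ ∈ S := ⟨⟨le_refl _, hlt.le⟩, hR0⟩
    have hSbdd : BddAbove S := ⟨x₁, fun x hx => hx.1.2⟩
    set c := sSup S with hcdef
    have hcS : c ∈ S := hSclosed.csSup_mem ⟨x₀, hSne⟩ hSbdd
    have hcx₁ : c < x₁ := by
      rcases (csSup_le ⟨x₀, hSne⟩ (fun x hx => hx.1.2)).lt_or_eq with h | h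
      · exact h
      · exact absurd (show R x₁ = 0 by rw [← h]; exact hcS.2) hR1
    have hcpos : 0 < c := hzero_pos c (le_trans h0 (le_trans hx₀.1 hcS.1.1)) hcS.2
    have hno : ∀ x ∈ Ioc c x₁, R x ≠ 0 := by
      intro x hx hRx
      have hxS : x ∈ S := ⟨⟨le_trans hcS.1.1 hx.1.le, hx.2⟩, hRx⟩
      exact absurd (le_csSup hSbdd hxS) (not_le.mpr hx.1)
    refine ⟨c, x₁, le_trans hx₀.1 hcS.1.1, hcpos, hcx₁, hx₁.2, ?_, ?_⟩
    · intro x hx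
      exact hno x ⟨hx.1, hx.2.le⟩
    · intro ε hε
      obtain ⟨δ, hδ, hδ2⟩ := Metric.continuousAt_iff.mp (hRc.continuousAt (x := c)) ε hε
      set m := min x₁ (c + δ) with hmdef
      have hm : c < m := lt_min hcx₁ (by linarith)
      refine ⟨(c + m)/2, ⟨by linarith, ?_⟩, ?_⟩
      · have : m ≤ x₁ := min_le_left _ _
        linarith
      · have hdist : dist ((c + m)/2) c < δ := by
          rw [Real.dist_eq, abs_of_nonneg (by linarith)]
          have : m ≤ c + δ := min_le_right _ _
          linarith
        have := hδ2 hdist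
        rwa [Real.dist_eq, hcS.2, sub_zero] at this

section Seg1
variable {F : ℝ → ℝ} {lam : ℝ}

lemma B_eq_zero_of_R_zero (hF : Differentiable ℝ F) (hlam : 0 < lam) {a b : ℝ} (hab : a < b)
    (hall : ∀ x ∈ Icc a b, rhoBar F lam x = 0) : ∀ x ∈ Icc a b, 1 - F x = 0 := by
  have hio : ∀ x ∈ Ioo a b, 1 - F x = 0 := by
    intro x hx
    have h1 : deriv (rhoBar F lam) x = -(lam * (1 - F x)) :=
      (hasDerivAt_rhoBar hF.continuous lam x).deriv
    have h2 : rhoBar F lam =ᶠ[nhds x] fun _ => 0 := by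
      filter_upwards [isOpen_Ioo.mem_nhds hx] with y hy using hall y (Ioo_subset_Icc_self hy)
    have h3 : deriv (rhoBar F lam) x = 0 := by
      rw [h2.deriv_eq]; exact deriv_const x 0
    rw [h3] at h1
    have h4 : lam * (1 - F x) = 0 := by linarith
    rcases mul_eq_zero.mp h4 with h | h
    · exact absurd h (ne_of_gt hlam)
    · exact h
  have h := Set.EqOn.closure (fun y hy => hio y hy)
    (continuous_const.sub hF.continuous) continuous_const
  rw [closure_Ioo hab.ne] at h
  intro x hx
  exact h hx

lemma derivF_eq_zero (hF : Differentiable ℝ F) {a b : ℝ}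
    (hB : ∀ x ∈ Icc a b, 1 - F x = 0) : ∀ x ∈ Ioo a b, deriv F x = 0 := by
  intro x hx
  have h2 : F =ᶠ[nhds x] fun _ => 1 := by
    filter_upwards [isOpen_Ioo.mem_nhds hx] with y hy
    have := hB y (Ioo_subset_Icc_self hy); linarith
  rw [h2.deriv_eq]; exact deriv_const x 1

lemma psi_hasDerivAt (hF : Differentiable ℝ F) (hlam : 0 < lam) {x : ℝ}
    (hRx : rhoBar F lam x ≠ 0) :
    HasDerivAt (fun y => (1 - F y) * tauFn F lam y / rhoBar F lam y ^ 2)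
      ((((1 - F x) / rhoBar F lam x + (1 - F x) / rhoBar F lam x)
          * (lam * tauFn F lam x * (1 - F x) / (rhoBar F lam x) ^ 2)
        + lam * x * (1 - F x) * (1 - F x) / (rhoBar F lam x) ^ 2)
        - tauFn F lam x / (rhoBar F lam x * rhoBar F lam x) * deriv F x) x := by
  have hFc : Continuous F := hF.continuous
  have hN : HasDerivAt (fun y => (1 - F y) * tauFn F lam y)
      (-(deriv F x) * tauFn F lam x + (1 - F x) * (lam * (x * (1 - F x)))) x := by
    have hB' : HasDerivAt (fun y => 1 - F y) (-(deriv F x)) x := ((hF x).hasDerivAt).const_sub 1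
    exact hB'.mul (hasDerivAt_tauFn hFc lam x)
  have hD : HasDerivAt (fun y => rhoBar F lam y ^ 2)
      (2 * rhoBar F lam x ^ 1 * -(lam * (1 - F x))) x :=
    (hasDerivAt_rhoBar hFc lam x).pow 2
  have hdiv := hN.div hD (pow_ne_zero 2 hRx)
  refine hdiv.congr_deriv ?_
  symm
  simp only [pow_one]
  field_simp
  ring

/-- Hill segment identity. -/
lemma hill_segment (hF : Differentiable ℝ F) (hlam : 0 < lam)
    {a b : ℝ} (h0 : 0 ≤ a) (hab : a < b)
    (hint1 : IntegrableOn
      (fun x => tauFn F lam x / (rhoBar F lam x * rhoBar F lam x) * deriv F x) (Ioc a b))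
    (hint2 : IntegrableOn (fun x =>
        ((1 - F x) / rhoBar F lam x + (1 - F x) / rhoBar F lam x)
          * (lam * tauFn F lam x * (1 - F x) / (rhoBar F lam x) ^ 2)
        + lam * x * (1 - F x) * (1 - F x) / (rhoBar F lam x) ^ 2) (Ioc a b)) :
    ∫ x in Ioc a b,
        ((((1 - F x) / rhoBar F lam x + (1 - F x) / rhoBar F lam x)
          * (lam * tauFn F lam x * (1 - F x) / (rhoBar F lam x) ^ 2)
        + lam * x * (1 - F x) * (1 - F x) / (rhoBar F lam x) ^ 2)
        - tauFn F lam x / (rhoBar F lam x * rhoBar F lam x) * deriv F x)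
      = (1 - F b) * tauFn F lam b / rhoBar F lam b ^ 2
        - (1 - F a) * tauFn F lam a / rhoBar F lam a ^ 2 := by
  have hFc : Continuous F := hF.continuous
  by_cases hz : ∀ x ∈ Icc a b, rhoBar F lam x ≠ 0
  · -- no zeros: FTC with Psi
    have key := intervalIntegral.integral_eq_sub_of_hasDerivAt
      (f := fun y => (1 - F y) * tauFn F lam y / rhoBar F lam y ^ 2)
      (f' := fun x => ((((1 - F x) / rhoBar F lam x + (1 - F x) / rhoBar F lam x)
          * (lam * tauFn F lam x * (1 - F x) / (rhoBar F lam x) ^ 2)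
        + lam * x * (1 - F x) * (1 - F x) / (rhoBar F lam x) ^ 2)
        - tauFn F lam x / (rhoBar F lam x * rhoBar F lam x) * deriv F x))
      (a := a) (b := b)
      (fun x hx => psi_hasDerivAt hF hlam (hz x ((uIcc_of_le hab.le) ▸ hx)))
      (by rw [intervalIntegrable_iff, uIoc_of_le hab.le]; exact hint2.sub hint1)
    rw [intervalIntegral.integral_of_le hab.le] at key
    exact key
  · push_neg at hz
    obtain ⟨x₀, hx₀, hR0⟩ := hz
    have hall : ∀ x ∈ Icc a b, rhoBar F lam x = 0 := by
      by_contra hc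
      push_neg at hc
      obtain ⟨x₁, hx₁, hR1⟩ := hc
      obtain ⟨p, q, hap, hp, hpq, hqb, hRne, hsmall⟩ :=
        exists_transition (continuous_rhoBar hFc lam) h0
          (by rw [rhoBar_zero]; norm_num) hx₀ hx₁ hR0 hR1
      have hsub : Ioo p q ⊆ Ioc a b := fun x hx =>
        ⟨lt_of_le_of_lt hap hx.1, le_trans hx.2.le hqb⟩
      exact hillvar_lemma hF hlam hp hpq hRne hsmall
        (hint1.mono_set hsub) (hint2.mono_set hsub)
    have hB := B_eq_zero_of_R_zero hF hlam hab hall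
    have hdF := derivF_eq_zero hF hB
    have hzero : ∀ x ∈ Ioc a b, ((((1 - F x) / rhoBar F lam x + (1 - F x) / rhoBar F lam x)
          * (lam * tauFn F lam x * (1 - F x) / (rhoBar F lam x) ^ 2)
        + lam * x * (1 - F x) * (1 - F x) / (rhoBar F lam x) ^ 2)
        - tauFn F lam x / (rhoBar F lam x * rhoBar F lam x) * deriv F x) = 0 := by
      intro x hx
      have hBx : 1 - F x = 0 := hB x (Ioc_subset_Icc_self hx)
      have hl : tauFn F lam x / (rhoBar F lam x * rhoBar F lam x) * deriv F x = 0 := by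
        rcases eq_or_lt_of_le hx.2 with h | h
        · have : rhoBar F lam x = 0 := hall x (Ioc_subset_Icc_self hx)
          rw [this]
          simp
        · rw [hdF x ⟨hx.1, h⟩]
          ring
      rw [hBx, hl]
      ring_nf
    have hPsia : (1 - F a) * tauFn F lam a / rhoBar F lam a ^ 2 = 0 := by
      rw [hB a (left_mem_Icc.mpr hab.le)]; ring_nf
    have hPsib : (1 - F b) * tauFn F lam b / rhoBar F lam b ^ 2 = 0 := by
      rw [hB b (right_mem_Icc.mpr hab.le)]; ring_nf
    rw [hPsia, hPsib, setIntegral_congr_fun measurableSet_Ioc hzero]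
    simp
end Seg1

section Seg2
variable {F : ℝ → ℝ} {lam : ℝ}

set_option maxHeartbeats 2000000 in
/-- Valley segment identity. -/
lemma valley_segment (hF : Differentiable ℝ F) (hlam : 0 < lam)
    {a b : ℝ} (h0 : 0 ≤ a) (hab : a < b)
    (hint1 : IntegrableOn
      (fun x => tauFn F lam b / (rhoBar F lam a * rhoBar F lam b) * deriv F x) (Ioc a b))
    (hint2 : IntegrableOn (fun x =>
        ((1 - F a) / rhoBar F lam a + (1 - F b) / rhoBar F lam b)
          * (lam * tauFn F lam b * (1 - F x) / (rhoBar F lam x) ^ 2)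
        + lam * x * (1 - F a) * (1 - F x) / (rhoBar F lam a) ^ 2) (Ioc a b)) :
    ∫ x in Ioc a b,
        ((((1 - F a) / rhoBar F lam a + (1 - F b) / rhoBar F lam b)
          * (lam * tauFn F lam b * (1 - F x) / (rhoBar F lam x) ^ 2)
        + lam * x * (1 - F a) * (1 - F x) / (rhoBar F lam a) ^ 2)
        - tauFn F lam b / (rhoBar F lam a * rhoBar F lam b) * deriv F x)
      = (1 - F b) * tauFn F lam b / rhoBar F lam b ^ 2
        - (1 - F a) * tauFn F lam a / rhoBar F lam a ^ 2 := by
  have hFc : Continuous F := hF.continuous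
  have hlamne : lam ≠ 0 := ne_of_gt hlam
  set Ra := rhoBar F lam a with hRadef
  set Rb := rhoBar F lam b with hRbdef
  set Ta := tauFn F lam a with hTadef
  set Tb := tauFn F lam b with hTbdef
  set Ba : ℝ := 1 - F a with hBadef
  set Bb : ℝ := 1 - F b with hBbdef
  by_cases hz : ∀ x ∈ Icc a b, rhoBar F lam x ≠ 0
  · -- no zeros: FTC with full antiderivative W
    have hRa : Ra ≠ 0 := hz a (left_mem_Icc.mpr hab.le)
    have hRb : Rb ≠ 0 := hz b (right_mem_Icc.mpr hab.le)
    have key := intervalIntegral.integral_eq_sub_of_hasDerivAt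
      (f := fun y => (Tb * (Ba / Ra + Bb / Rb)) * (rhoBar F lam y)⁻¹
        + Ba / Ra ^ 2 * tauFn F lam y - Tb / (Ra * Rb) * F y)
      (f' := fun x => (((Ba / Ra + Bb / Rb) * (lam * Tb * (1 - F x) / (rhoBar F lam x) ^ 2)
        + lam * x * Ba * (1 - F x) / Ra ^ 2)
        - Tb / (Ra * Rb) * deriv F x))
      (a := a) (b := b) (fun x hx => ?_) ?_
    · rw [intervalIntegral.integral_of_le hab.le] at key
      rw [key]
      rw [← hRadef, ← hRbdef]
      field_simp
      ring
    · -- derivative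
      have hx' : x ∈ Icc a b := (uIcc_of_le hab.le) ▸ hx
      have hRx : rhoBar F lam x ≠ 0 := hz x hx'
      have h1 := ((hasDerivAt_rhoBar hFc lam x).inv hRx).const_mul (Tb * (Ba / Ra + Bb / Rb))
      have h2 := (hasDerivAt_tauFn hFc lam x).const_mul (Ba / Ra ^ 2)
      have h3 := ((hF x).hasDerivAt).const_mul (Tb / (Ra * Rb))
      have htot := (h1.add h2).sub h3
      refine htot.congr_deriv ?_
      symm
      field_simp
    · rw [intervalIntegrable_iff, uIoc_of_le hab.le]
      exact hint2.sub hint1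
  · push_neg at hz
    obtain ⟨x₀, hx₀, hR0⟩ := hz
    by_cases hz2 : ∀ x ∈ Icc a b, rhoBar F lam x = 0
    · -- everything zero
      have hB := B_eq_zero_of_R_zero hF hlam hab hz2
      have hRa0 : Ra = 0 := hz2 a (left_mem_Icc.mpr hab.le)
      have hBa0 : Ba = 0 := hB a (left_mem_Icc.mpr hab.le)
      have hBb0 : Bb = 0 := hB b (right_mem_Icc.mpr hab.le)
      have hzero : ∀ x ∈ Ioc a b,
          (((Ba / Ra + Bb / Rb) * (lam * Tb * (1 - F x) / (rhoBar F lam x) ^ 2)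
            + lam * x * Ba * (1 - F x) / Ra ^ 2)
            - Tb / (Ra * Rb) * deriv F x) = 0 := by
        intro x hx
        have hBx : 1 - F x = 0 := hB x (Ioc_subset_Icc_self hx)
        rw [hBx, hRa0, hBa0]
        simp
      rw [setIntegral_congr_fun measurableSet_Ioc hzero, hBa0, hBb0]
      simp
    · push_neg at hz2
      obtain ⟨x₁, hx₁, hR1⟩ := hz2
      -- get c = 0
      obtain ⟨p, q, hap, hp, hpq, hqb, hRne, hsmall⟩ :=
        exists_transition (continuous_rhoBar hFc lam) h0
          (by rw [rhoBar_zero]; norm_num) hx₀ hx₁ hR0 hR1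
      have hsub : Ioo p q ⊆ Ioc a b := fun x hx =>
        ⟨lt_of_le_of_lt hap hx.1, le_trans hx.2.le hqb⟩
      have ht2 : IntegrableOn (fun x => lam * x * Ba * (1 - F x) / Ra ^ 2) (Ioc a b) := by
        have hc : Continuous (fun x => lam * x * Ba * (1 - F x) / Ra ^ 2) :=
          (((continuous_const.mul continuous_id).mul continuous_const).mul
            (continuous_const.sub hFc)).div_const _
        exact hc.integrableOn_Ioc
      have ht1int : IntegrableOn
          (fun x => ((Ba / Ra + Bb / Rb) * (lam * Tb)) * ((1 - F x) / rhoBar F lam x ^ 2))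
          (Ioo p q) := by
        have hsubi : IntegrableOn (fun x =>
            ((Ba / Ra + Bb / Rb) * (lam * Tb * (1 - F x) / (rhoBar F lam x) ^ 2)
              + lam * x * Ba * (1 - F x) / Ra ^ 2)
            - lam * x * Ba * (1 - F x) / Ra ^ 2) (Ioc a b) := hint2.sub ht2
        have h := hsubi.mono_set hsub
        refine (integrable_congr ?_).mp h
        filter_upwards with x
        ring
      have hc0 : (Ba / Ra + Bb / Rb) * (lam * Tb) = 0 :=
        var_lemma hFc hlam hpq hRne hsmall ht1int
      -- first term of vform vanishes identically
      have ht1zero : ∀ x : ℝ,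
          (Ba / Ra + Bb / Rb) * (lam * Tb * (1 - F x) / (rhoBar F lam x) ^ 2) = 0 := by
        intro x
        rcases mul_eq_zero.mp hc0 with h | h
        · rw [h, zero_mul]
        · have hTb : Tb = 0 := by
            rcases mul_eq_zero.mp h with h' | h'
            · exact absurd h' hlamne
            · exact h'
          rw [hTb]
          simp
      by_cases hRa : Ra = 0
      · -- R a = 0 : everything vanishes
        have hzero : ∀ x ∈ Ioc a b,
            (((Ba / Ra + Bb / Rb) * (lam * Tb * (1 - F x) / (rhoBar F lam x) ^ 2)
              + lam * x * Ba * (1 - F x) / Ra ^ 2)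
              - Tb / (Ra * Rb) * deriv F x) = 0 := by
          intro x _
          rw [ht1zero x, hRa]
          simp
        rw [setIntegral_congr_fun measurableSet_Ioc hzero]
        have hPsia : Ba * Ta / Ra ^ 2 = 0 := by rw [hRa]; simp
        have hPsib : Bb * Tb / Rb ^ 2 = 0 := by
          rw [hRa] at hc0
          simp only [div_zero, zero_add] at hc0
          rcases mul_eq_zero.mp hc0 with h | h
          · by_cases hRb : Rb = 0
            · rw [hRb]; simp
            · have : Bb = 0 := by
                rcases div_eq_zero_iff.mp h with h' | h'
                · exact h'
                · exact absurd h' hRb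
              rw [this]; simp
          · have hTb : Tb = 0 := by
              rcases mul_eq_zero.mp h with h' | h'
              · exact absurd h' hlamne
              · exact h'
            rw [hTb]; simp
        rw [hPsia, hPsib]
        simp
      · by_cases hRb : Rb = 0
        · -- R a ≠ 0, R b = 0
          have hc0' : Ba / Ra * (lam * Tb) = 0 := by
            rw [hRb] at hc0
            simpa using hc0
          have hBaTb : Ba = 0 ∨ Tb = 0 := by
            rcases mul_eq_zero.mp hc0' with h | h
            · left
              rcases div_eq_zero_iff.mp h with h' | h'
              · exact h'
              · exact absurd h' hRa
            · right
              rcases mul_eq_zero.mp h with h' | h'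
              · exact absurd h' hlamne
              · exact h'
          have hlzero : Tb / (Ra * Rb) = 0 := by rw [hRb]; simp
          have key := intervalIntegral.integral_eq_sub_of_hasDerivAt
            (f := fun y => Ba / Ra ^ 2 * tauFn F lam y)
            (f' := fun x => (((Ba / Ra + Bb / Rb) * (lam * Tb * (1 - F x) / (rhoBar F lam x) ^ 2)
              + lam * x * Ba * (1 - F x) / Ra ^ 2)
              - Tb / (Ra * Rb) * deriv F x))
            (a := a) (b := b) (fun x _ => ?_) ?_
          · rw [intervalIntegral.integral_of_le hab.le] at key
            rw [key]
            show Ba / Ra ^ 2 * tauFn F lam b - Ba / Ra ^ 2 * tauFn F lam a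
              = Bb * Tb / Rb ^ 2 - Ba * Ta / Ra ^ 2
            rw [← hTbdef, ← hTadef]
            rcases hBaTb with h | h
            · simp [h, hRb]
            · rw [h, hRb]; ring
          · have h2 := (hasDerivAt_tauFn hFc lam x).const_mul (Ba / Ra ^ 2)
            refine h2.congr_deriv ?_
            symm
            show ((Ba / Ra + Bb / Rb) * (lam * Tb * (1 - F x) / (rhoBar F lam x) ^ 2)
              + lam * x * Ba * (1 - F x) / Ra ^ 2)
              - Tb / (Ra * Rb) * deriv F x = Ba / Ra ^ 2 * (lam * (x * (1 - F x)))
            rw [ht1zero x, hlzero]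
            ring
          · rw [intervalIntegrable_iff, uIoc_of_le hab.le]
            exact hint2.sub hint1
        · -- R a ≠ 0, R b ≠ 0, interior zero, c = 0
          have hTbC : Tb * (Ba / Ra + Bb / Rb) = 0 := by
            have : lam * (Tb * (Ba / Ra + Bb / Rb)) = 0 := by
              rw [← hc0]; ring
            rcases mul_eq_zero.mp this with h | h
            · exact absurd h hlamne
            · exact h
          have key := intervalIntegral.integral_eq_sub_of_hasDerivAt
            (f := fun y => Ba / Ra ^ 2 * tauFn F lam y - Tb / (Ra * Rb) * F y)
            (f' := fun x => (((Ba / Ra + Bb / Rb) * (lam * Tb * (1 - F x) / (rhoBar F lam x) ^ 2)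
              + lam * x * Ba * (1 - F x) / Ra ^ 2)
              - Tb / (Ra * Rb) * deriv F x))
            (a := a) (b := b) (fun x _ => ?_) ?_
          · rw [intervalIntegral.integral_of_le hab.le] at key
            rw [key]
            show Ba / Ra ^ 2 * tauFn F lam b - Tb / (Ra * Rb) * F b
                - (Ba / Ra ^ 2 * tauFn F lam a - Tb / (Ra * Rb) * F a)
              = Bb * Tb / Rb ^ 2 - Ba * Ta / Ra ^ 2
            rw [← hTbdef, ← hTadef]
            rcases mul_eq_zero.mp hTbC with h | h
            · -- Tb = 0
              rw [h]
              field_simp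
              ring
            · -- Ba/Ra + Bb/Rb = 0
              have hBb : Bb = -(Ba * Rb) / Ra := by
                field_simp at h ⊢
                linarith
              have hFb : F b = 1 - (-(Ba * Rb) / Ra) := by
                rw [← hBb, hBbdef]; ring
              have hFa : F a = 1 - Ba := by rw [hBadef]; ring
              rw [hFb, hFa, hBb]
              field_simp
              ring
          · have h2 := (hasDerivAt_tauFn hFc lam x).const_mul (Ba / Ra ^ 2)
            have h3 := ((hF x).hasDerivAt).const_mul (Tb / (Ra * Rb))
            have htot := h2.sub h3
            refine htot.congr_deriv ?_
            symm
            show ((Ba / Ra + Bb / Rb) * (lam * Tb * (1 - F x) / (rhoBar F lam x) ^ 2)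
              + lam * x * Ba * (1 - F x) / Ra ^ 2)
              - Tb / (Ra * Rb) * deriv F x
              = Ba / Ra ^ 2 * (lam * (x * (1 - F x))) - Tb / (Ra * Rb) * deriv F x
            rw [ht1zero x]
            ring
          · rw [intervalIntegrable_iff, uIoc_of_le hab.le]
            exact hint2.sub hint1
end Seg2

theorem mean_waiting_time_formula (F : ℝ → ℝ) (hF : Differentiable ℝ F)
    (lam : ℝ) (hlam : 0 < lam)
    (hintF : IntegrableOn (fun t => 1 - F t) (Set.Ioi 0))
    (hρ : lam * ∫ t in Set.Ioi (0:ℝ), (1 - F t) < 1)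
    (u v : ℕ → ℝ) (y z : ℝ → ℝ) (hvp : HillValleyPair u v y z)
    (hlim : Filter.Tendsto
      (fun x => (1 - F x) * tauFn F lam (z x) / (rhoBar F lam (y x) * rhoBar F lam (z x)))
      Filter.atTop (nhds 0))
    (hint1 : IntegrableOn
      (fun x => tauFn F lam (z x) / (rhoBar F lam (y x) * rhoBar F lam (z x)) * deriv F x)
      (Set.Ioi 0))
    (hint2 : IntegrableOn (fun x =>
        ((1 - F (y x)) / rhoBar F lam (y x) + (1 - F (z x)) / rhoBar F lam (z x))
          * (lam * tauFn F lam (z x) * (1 - F x) / (rhoBar F lam x) ^ 2)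
        + lam * x * (1 - F (y x)) * (1 - F x) / (rhoBar F lam (y x)) ^ 2)
      (Set.Ioi 0)) :
    ∫ x in Set.Ioi (0:ℝ),
        tauFn F lam (z x) / (rhoBar F lam (y x) * rhoBar F lam (z x)) * deriv F x
      = ∫ x in Set.Ioi (0:ℝ),
          (((1 - F (y x)) / rhoBar F lam (y x) + (1 - F (z x)) / rhoBar F lam (z x))
            * (lam * tauFn F lam (z x) * (1 - F x) / (rhoBar F lam x) ^ 2)
          + lam * x * (1 - F (y x)) * (1 - F x) / (rhoBar F lam (y x)) ^ 2) := by
  set lf : ℝ → ℝ := fun x =>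
    tauFn F lam (z x) / (rhoBar F lam (y x) * rhoBar F lam (z x)) * deriv F x with hlf
  set rf : ℝ → ℝ := fun x =>
    ((1 - F (y x)) / rhoBar F lam (y x) + (1 - F (z x)) / rhoBar F lam (z x))
      * (lam * tauFn F lam (z x) * (1 - F x) / (rhoBar F lam x) ^ 2)
    + lam * x * (1 - F (y x)) * (1 - F x) / (rhoBar F lam (y x)) ^ 2 with hrf
  set D : ℝ → ℝ := fun x => rf x - lf x with hD
  set Psi : ℝ → ℝ := fun x => (1 - F x) * tauFn F lam x / rhoBar F lam x ^ 2 with hPsi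
  -- basic order facts
  have huv : ∀ i, u i ≤ v i := by
    intro i
    cases i with
    | zero => exact hvp.uv_zero
    | succ n => exact (hvp.u_lt_v n).le
  have hu0 : ∀ i, 0 ≤ u i := by
    intro i
    induction i with
    | zero => rw [hvp.u_zero]
    | succ n ih => exact le_trans ih (le_trans (huv n) (hvp.v_lt_u n).le)
  have hv0 : ∀ i, 0 ≤ v i := fun i => (hu0 i).trans (huv i)
  have humono : Monotone u :=
    monotone_nat_of_le_succ (fun n => le_trans (huv n) (hvp.v_lt_u n).le)
  -- integrability of D
  have hDint : IntegrableOn D (Ioi 0) := by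
    have : IntegrableOn (fun x => rf x - lf x) (Ioi 0) := hint2.sub hint1
    exact this
  have hDiiv : ∀ {s t : ℝ}, 0 ≤ s → s ≤ t → IntervalIntegrable D volume s t := by
    intro s t hs hst
    rw [intervalIntegrable_iff, uIoc_of_le hst]
    exact hDint.mono_set (fun x hx => lt_of_le_of_lt hs hx.1)
  -- valley segments
  have hval : ∀ i, ∫ x in (u i)..(v i), D x = Psi (v i) - Psi (u i) := by
    intro i
    rcases eq_or_lt_of_le (huv i) with he | hlt
    · rw [← he, intervalIntegral.integral_same, sub_self]
    · rw [intervalIntegral.integral_of_le hlt.le]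
      have hEq : EqOn D (fun x =>
          ((((1 - F (u i)) / rhoBar F lam (u i) + (1 - F (v i)) / rhoBar F lam (v i))
            * (lam * tauFn F lam (v i) * (1 - F x) / (rhoBar F lam x) ^ 2)
          + lam * x * (1 - F (u i)) * (1 - F x) / (rhoBar F lam (u i)) ^ 2)
          - tauFn F lam (v i) / (rhoBar F lam (u i) * rhoBar F lam (v i)) * deriv F x))
          (Ioc (u i) (v i)) := by
        intro x hx
        obtain ⟨hy, hz⟩ := hvp.valley i x hx
        simp only [hD, hrf, hlf, hy, hz]
      rw [setIntegral_congr_fun measurableSet_Ioc hEq]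
      have hsub : Ioc (u i) (v i) ⊆ Ioi 0 := fun x hx => lt_of_le_of_lt (hu0 i) hx.1
      refine valley_segment hF hlam (hu0 i) hlt ?_ ?_
      · refine ((hint1.mono_set hsub).congr_fun ?_ measurableSet_Ioc)
        intro x hx
        obtain ⟨hy, hz⟩ := hvp.valley i x hx
        simp only [hlf, hy, hz]
      · refine ((hint2.mono_set hsub).congr_fun ?_ measurableSet_Ioc)
        intro x hx
        obtain ⟨hy, hz⟩ := hvp.valley i x hx
        simp only [hrf, hy, hz]
  -- hill segments
  have hhill : ∀ i, ∫ x in (v i)..(u (i+1)), D x = Psi (u (i+1)) - Psi (v i) := by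
    intro i
    have hlt := hvp.v_lt_u i
    rw [intervalIntegral.integral_of_le hlt.le]
    have hEq : EqOn D (fun x =>
        ((((1 - F x) / rhoBar F lam x + (1 - F x) / rhoBar F lam x)
          * (lam * tauFn F lam x * (1 - F x) / (rhoBar F lam x) ^ 2)
        + lam * x * (1 - F x) * (1 - F x) / (rhoBar F lam x) ^ 2)
        - tauFn F lam x / (rhoBar F lam x * rhoBar F lam x) * deriv F x))
        (Ioc (v i) (u (i+1))) := by
      intro x hx
      obtain ⟨hy, hz⟩ := hvp.hill i x hx
      simp only [hD, hrf, hlf, hy, hz]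
    rw [setIntegral_congr_fun measurableSet_Ioc hEq]
    have hsub : Ioc (v i) (u (i+1)) ⊆ Ioi 0 := fun x hx => lt_of_le_of_lt (hv0 i) hx.1
    refine hill_segment hF hlam (hv0 i) hlt ?_ ?_
    · refine ((hint1.mono_set hsub).congr_fun ?_ measurableSet_Ioc)
      intro x hx
      obtain ⟨hy, hz⟩ := hvp.hill i x hx
      simp only [hlf, hy, hz]
    · refine ((hint2.mono_set hsub).congr_fun ?_ measurableSet_Ioc)
      intro x hx
      obtain ⟨hy, hz⟩ := hvp.hill i x hx
      simp only [hrf, hy, hz]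
  -- telescoping
  have hPsi0 : Psi 0 = 0 := by
    simp only [hPsi, tauFn_zero, mul_zero, zero_div]
  have htel : ∀ N, ∫ x in (0:ℝ)..(u N), D x = Psi (u N) := by
    intro N
    induction N with
    | zero => rw [hvp.u_zero, intervalIntegral.integral_same, hPsi0]
    | succ n ih =>
      have i1 : IntervalIntegrable D volume 0 (u n) := hDiiv le_rfl (hu0 n)
      have i2 : IntervalIntegrable D volume (u n) (v n) := hDiiv (hu0 n) (huv n)
      have i3 : IntervalIntegrable D volume 0 (v n) := hDiiv le_rfl (hv0 n)
      have i4 : IntervalIntegrable D volume (v n) (u (n+1)) := hDiiv (hv0 n) (hvp.v_lt_u n).le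
      have e1 := intervalIntegral.integral_add_adjacent_intervals i1 i2
      have e2 := intervalIntegral.integral_add_adjacent_intervals i3 i4
      rw [← e2, ← e1, ih, hval n, hhill n]
      ring
  -- limit
  have hmono : Monotone (fun N => Ioc (0:ℝ) (u N)) := fun N M h => Ioc_subset_Ioc_right (humono h)
  have hUnion : (⋃ N, Ioc (0:ℝ) (u N)) = Ioi 0 := by
    ext x
    constructor
    · rintro ⟨s, ⟨N, rfl⟩, hx⟩
      exact hx.1
    · intro hx
      obtain ⟨N, hN⟩ := (hvp.u_tendsto.eventually_ge_atTop x).exists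
      exact mem_iUnion.mpr ⟨N, hx, hN⟩
  have hset := tendsto_setIntegral_of_monotone (fun N => measurableSet_Ioc) hmono
    (hUnion ▸ hDint)
  rw [hUnion] at hset
  have hPsiTend : Filter.Tendsto (fun N => Psi (u N)) Filter.atTop (nhds 0) := by
    have h1 := hlim.comp hvp.u_tendsto
    refine h1.congr' ?_
    filter_upwards [Filter.eventually_ge_atTop 1] with N hN
    obtain ⟨n, rfl⟩ := Nat.exists_eq_add_of_le' hN
    have hx : u (n + 1) ∈ Ioc (v n) (u (n + 1)) := ⟨hvp.v_lt_u n, le_rfl⟩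
    obtain ⟨hy, hz⟩ := hvp.hill n _ hx
    show (fun x => (1 - F x) * tauFn F lam (z x) / (rhoBar F lam (y x) * rhoBar F lam (z x)))
      (u (n+1)) = Psi (u (n+1))
    simp only [hPsi]
    rw [hy, hz, sq]
  have hL : (fun N => ∫ x in Ioc (0:ℝ) (u N), D x) = fun N => Psi (u N) := by
    funext N
    rw [← intervalIntegral.integral_of_le (hu0 N), htel N]
  rw [hL] at hset
  have hzero : ∫ x in Ioi (0:ℝ), D x = 0 := tendsto_nhds_unique hset hPsiTend
  have hsplit : ∫ x in Ioi (0:ℝ), D x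
      = (∫ x in Ioi (0:ℝ), rf x) - ∫ x in Ioi (0:ℝ), lf x := integral_sub hint2 hint1
  rw [hsplit] at hzero
  linarith
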